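/- The volume of the symmetric difference of two closed balls in ℝ³ of equal radius t whose centers are at distance δ apart is at most (4π/3)·(3δt² + δ³/4). -/

import Mathlib

open MeasureTheory Set Metric Pointwise

noncomputable section

/-- 3-dimensional Euclidean space. -/
abbrev E3 := EuclideanSpace ℝ (Fin 3)

/-- The lattice generated by the vectors `b 0, b 1, b 2`. -/
def lat (b : Fin 3 → E3) : Set E3 := {x | ∃ n : Fin 3 → ℤ, x = ∑ i, (n i : ℝ) • b i}

/-- The unit cell spanned by the vectors `b 0, b 1, b 2`. -/
def cell (b : Fin 3 → E3) : Set E3 :=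
  {x | ∃ c : Fin 3 → ℝ, (∀ i, 0 ≤ c i ∧ c i < 1) ∧ x = ∑ i, c i • b i}

/-- The `k`-fold cover: points lying in at least `k` closed balls of radius `t`
centered at points of `A`. -/
def coverGE (A : Set E3) (t : ℝ) (k : ℕ) : Set E3 :=
  {x | ∃ F : Finset E3, F.card = k ∧ ↑F ⊆ A ∧ ∀ a ∈ F, dist x a ≤ t}

/-- Points lying in exactly `k` closed balls of radius `t` centered at points of `A`. -/
def coverEQ (A : Set E3) (t : ℝ) (k : ℕ) : Set E3 :=
  {x | ∃ F : Finset E3, ↑F = {a ∈ A | dist x a ≤ t} ∧ F.card = k}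

/-- The `k`-th Dirichlet–Voronoi domain of `a` in `A` (with `D_0 = ∅`). -/
def DV (A : Set E3) (a : E3) : ℕ → Set E3
  | 0 => ∅
  | (k+1) => {x | ({b ∈ A | dist x b < dist x a}).ncard ≤ k}

/-- The `k`-th Brillouin zone of `a` in `A`. -/
def BZ (A : Set E3) (a : E3) (k : ℕ) : Set E3 := DV A a k \ DV A a (k-1)

lemma gamma52 : Real.Gamma ((3:ℝ) / 2 + 1) = 3 / 4 * Real.sqrt Real.pi := by
  rw [Real.Gamma_add_one (by norm_num)]
  have : (3:ℝ)/2 = 1/2 + 1 := by norm_num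
  rw [this, Real.Gamma_add_one (by norm_num), Real.Gamma_one_half_eq]
  ring

lemma vol_cb (x : E3) (r : ℝ) (hr : 0 ≤ r) :
    volume (closedBall x r) = ENNReal.ofReal (4 * Real.pi / 3 * r ^ 3) := by
  rw [EuclideanSpace.volume_closedBall]
  have hc : (Fintype.card (Fin 3) : ℝ) = 3 := by simp
  rw [show Fintype.card (Fin 3) = 3 from rfl]
  rw [show ((3:ℕ):ℝ)/2 + 1 = (3:ℝ)/2 + 1 by norm_num, gamma52]
  rw [← ENNReal.ofReal_pow hr, ← ENNReal.ofReal_mul (by positivity)]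
  congr 1
  have hs : Real.sqrt Real.pi ^ 3 = Real.pi * Real.sqrt Real.pi := by
    rw [pow_succ, Real.sq_sqrt Real.pi_pos.le]
  rw [hs]
  have h0 : Real.sqrt Real.pi ≠ 0 := by positivity
  field_simp

theorem volume_symmDiff_balls_le (t δ : ℝ) (ht : 0 ≤ t) (a q : E3)
    (hδ : dist a q = δ) :
    volume ((closedBall a t \ closedBall q t) ∪ (closedBall q t \ closedBall a t)) ≤
      ENNReal.ofReal ((4 * Real.pi / 3) * (3 * δ * t ^ 2 + δ ^ 3 / 4)) := by
  have hδ0 : 0 ≤ δ := hδ ▸ dist_nonneg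
  set m : E3 := midpoint ℝ a q with hm
  have hma : dist m a = δ / 2 := by
    rw [hm, dist_midpoint_left, hδ]; rw [Real.norm_ofNat]; ring
  have hmq : dist m q = δ / 2 := by
    rw [hm, dist_midpoint_right, hδ]; rw [Real.norm_ofNat]; ring
  have hsub : (closedBall a t \ closedBall q t) ∪ (closedBall q t \ closedBall a t) ⊆
      closedBall m (t + δ / 2) \ closedBall m (t - δ / 2) := by
    rintro x (⟨hxa, hxq⟩ | ⟨hxq, hxa⟩)
    · refine ⟨?_, ?_⟩
      · have := dist_triangle x a m
        simp only [mem_closedBall] at hxa ⊢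
        rw [dist_comm a m] at this
        linarith [mem_closedBall.mp hxa]
      · intro hx
        apply hxq
        have h1 := dist_triangle x m q
        simp only [mem_closedBall] at hx ⊢
        linarith [hmq ▸ h1]
    · refine ⟨?_, ?_⟩
      · have := dist_triangle x q m
        simp only [mem_closedBall] at hxq ⊢
        rw [dist_comm q m] at this
        linarith
      · intro hx
        apply hxa
        have h1 := dist_triangle x m a
        simp only [mem_closedBall] at hx ⊢
        linarith [hma ▸ h1]
  refine le_trans (measure_mono hsub) ?_
  rcases le_or_gt (δ / 2) t with hcase | hcase
  · have hdiff : volume (closedBall m (t + δ / 2) \ closedBall m (t - δ / 2)) =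
        volume (closedBall m (t + δ / 2)) - volume (closedBall m (t - δ / 2)) := by
      apply measure_diff (closedBall_subset_closedBall (by linarith))
        measurableSet_closedBall.nullMeasurableSet
        (measure_closedBall_lt_top).ne
    rw [hdiff, vol_cb m _ (by linarith), vol_cb m _ (by linarith),
      ← ENNReal.ofReal_sub _ (mul_nonneg (by positivity) (pow_nonneg (by linarith) 3))]
    apply ENNReal.ofReal_le_ofReal
    nlinarith [Real.pi_pos]
  · refine le_trans (measure_mono diff_subset) ?_
    rw [vol_cb m _ (by linarith)]
    apply ENNReal.ofReal_le_ofReal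
    have h3 : (0:ℝ) ≤ (δ/2 - t)^3 := pow_nonneg (by linarith) 3
    have hkey : (t + δ/2)^3 ≤ 3 * δ * t ^ 2 + δ ^ 3 / 4 := by nlinarith
    have hπ : (0:ℝ) ≤ 4 * Real.pi / 3 := by positivity
    calc 4 * Real.pi / 3 * (t + δ/2)^3 ≤ 4 * Real.pi / 3 * (3 * δ * t ^ 2 + δ ^ 3 / 4) :=
          mul_le_mul_of_nonneg_left hkey hπ
      _ = _ := by ring
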